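/- For integers n ≥ 1, 1 ≤ k ≤ n, and m ≥ 0, the sum over j ≥ 0 of C(j,m)·C(k-1,j)/C(n,j) equals (n+1)/(n+m+2-k) · C(k-1,m)/C(n+m+1-k,m). -/

import Mathlib

open Finset

lemma nat_key (m d : ℕ) :
    (m + d + 1) * Nat.choose (m + d) m *
      (Nat.choose (m + d + 1) m + Nat.choose (m + d + 1) (m + 1)) =
    (m + d + 2) * Nat.choose (m + d + 1) m * Nat.choose (m + d + 1) (m + 1) := by
  have h1 : (m + d + 1) * Nat.choose (m + d) m
      = Nat.choose (m + d + 1) (m + 1) * (m + 1) := Nat.add_one_mul_choose_eq (m + d) m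
  have h2 : (m + d + 2) * Nat.choose (m + d + 1) m
      = Nat.choose (m + d + 2) (m + 1) * (m + 1) := Nat.add_one_mul_choose_eq (m + d + 1) m
  have h3 : Nat.choose (m + d + 1) m + Nat.choose (m + d + 1) (m + 1)
      = Nat.choose (m + d + 2) (m + 1) := (Nat.choose_succ_succ' (m + d + 1) m).symm
  calc (m + d + 1) * Nat.choose (m + d) m *
        (Nat.choose (m + d + 1) m + Nat.choose (m + d + 1) (m + 1))
      = Nat.choose (m + d + 1) (m + 1) * (m + 1) * Nat.choose (m + d + 2) (m + 1) := by
        rw [h1, h3]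
    _ = Nat.choose (m + d + 1) (m + 1) * (Nat.choose (m + d + 2) (m + 1) * (m + 1)) := by ring
    _ = Nat.choose (m + d + 1) (m + 1) * ((m + d + 2) * Nat.choose (m + d + 1) m) := by rw [h2]
    _ = _ := by ring

lemma sumA : ∀ (K m d : ℕ),
    (∑ i ∈ Finset.range (K + 1),
        (Nat.choose K i : ℚ) / (Nat.choose (m + K + d) (m + i) : ℚ))
      = ((m + K + d : ℕ) + 1 : ℚ) /
          (((m + d + 1 : ℕ) : ℚ) * (Nat.choose (m + d) m : ℚ)) := by
  intro K
  induction K with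
  | zero =>
      intro m d
      have hne : (Nat.choose (m + d) m : ℚ) ≠ 0 := by
        exact_mod_cast (Nat.choose_pos (Nat.le_add_right m d)).ne'
      simp only [Nat.zero_add, Finset.sum_range_one, Nat.choose_self, Nat.cast_one, Nat.add_zero, add_zero]
      push_cast
      field_simp
  | succ K ih =>
      intro m d
      set n := m + (K + 1) + d with hn
      have hn1 : (m + 1) + K + d = n := by omega
      have hn2 : m + K + (d + 1) = n := by omega
      have split : (∑ i ∈ Finset.range (K + 2),
            (Nat.choose (K + 1) i : ℚ) / (Nat.choose n (m + i) : ℚ))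
          = (∑ i ∈ Finset.range (K + 1),
              (Nat.choose K i : ℚ) / (Nat.choose n ((m + 1) + i) : ℚ))
            + ∑ i ∈ Finset.range (K + 1),
              (Nat.choose K i : ℚ) / (Nat.choose n (m + i) : ℚ) := by
        rw [Finset.sum_range_succ' (fun i => (Nat.choose (K + 1) i : ℚ) / (Nat.choose n (m + i) : ℚ)) (K + 1)]
        have e : ∀ i, ((Nat.choose (K + 1) (i + 1) : ℚ) / (Nat.choose n (m + (i + 1)) : ℚ))
            = (Nat.choose K i : ℚ) / (Nat.choose n ((m + 1) + i) : ℚ)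
              + (Nat.choose K (i + 1) : ℚ) / (Nat.choose n (m + (i + 1)) : ℚ) := by
          intro i
          have : m + (i + 1) = (m + 1) + i := by omega
          rw [Nat.choose_succ_succ, this]
          push_cast
          rw [add_div]
        simp only [e]
        rw [Finset.sum_add_distrib]
        have e2 : (∑ i ∈ Finset.range (K + 1),
              (Nat.choose K (i + 1) : ℚ) / (Nat.choose n (m + (i + 1)) : ℚ))
            + (Nat.choose (K + 1) 0 : ℚ) / (Nat.choose n (m + 0) : ℚ)
            = ∑ i ∈ Finset.range (K + 1),
              (Nat.choose K i : ℚ) / (Nat.choose n (m + i) : ℚ) := by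
          rw [Finset.sum_range_succ (fun i => (Nat.choose K (i + 1) : ℚ) / (Nat.choose n (m + (i + 1)) : ℚ)) K]
          rw [Finset.sum_range_succ' (fun i => (Nat.choose K i : ℚ) / (Nat.choose n (m + i) : ℚ)) K]
          simp [Nat.choose_succ_self]
        rw [add_assoc, e2]
      rw [split]
      have ih1 := ih (m + 1) d
      have ih2 := ih m (d + 1)
      rw [hn1] at ih1
      rw [hn2] at ih2
      have h1' : m + 1 + d = m + d + 1 := by omega
      have h2' : m + (d + 1) = m + d + 1 := by omega
      rw [h1'] at ih1
      rw [h2'] at ih2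
      rw [ih1, ih2]
      have keyQ : ((m : ℚ) + d + 1) * (Nat.choose (m + d) m : ℚ) *
          ((Nat.choose (m + d + 1) m : ℚ) + (Nat.choose (m + d + 1) (m + 1) : ℚ)) =
          ((m : ℚ) + d + 2) * (Nat.choose (m + d + 1) m : ℚ) *
            (Nat.choose (m + d + 1) (m + 1) : ℚ) := by
        exact_mod_cast nat_key m d
      have c1 : (Nat.choose (m + d) m : ℚ) ≠ 0 := by
        exact_mod_cast (Nat.choose_pos (by omega)).ne'
      have c2 : (Nat.choose (m + d + 1) m : ℚ) ≠ 0 := by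
        exact_mod_cast (Nat.choose_pos (by omega)).ne'
      have c3 : (Nat.choose (m + d + 1) (m + 1) : ℚ) ≠ 0 := by
        exact_mod_cast (Nat.choose_pos (by omega)).ne'
      have d1 : ((m : ℚ) + d + 2) ≠ 0 := by positivity
      have d2 : ((m : ℚ) + d + 1) ≠ 0 := by positivity
      have dP : ((m + d + 1 + 1 : ℕ) : ℚ) ≠ 0 := Nat.cast_ne_zero.mpr (by omega)
      have dQ : ((m + d + 1 : ℕ) : ℚ) ≠ 0 := Nat.cast_ne_zero.mpr (by omega)
      have hA := mul_ne_zero dP c3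
      have hB := mul_ne_zero dP c2
      have hC := mul_ne_zero dQ c1
      rw [div_add_div _ _ hA hB, div_eq_div_iff (mul_ne_zero hA hB) hC]
      push_cast [hn]
      linear_combination ((m : ℚ) + K + d + 2) * ((m : ℚ) + d + 2) * keyQ

theorem choose_ratio_weighted_sum (n k m : ℕ) (hk1 : 1 ≤ k) (hkn : k ≤ n)
    (hm : m + k ≤ n + 1) :
    (∑ j ∈ Finset.range (n + 1),
        (Nat.choose j m : ℚ) * (Nat.choose (k - 1) j : ℚ) / (Nat.choose n j : ℚ)) =
      ((n : ℚ) + 1) / ((n : ℚ) + (m : ℚ) + 2 - (k : ℚ)) *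
        ((Nat.choose (k - 1) m : ℚ) / (Nat.choose (n + m + 1 - k) m : ℚ)) := by
  rcases le_or_gt k m with hkm | hmk
  · -- degenerate case: m ≥ k, both sides vanish
    have hR : Nat.choose (k - 1) m = 0 := Nat.choose_eq_zero_of_lt (by omega)
    rw [hR]
    rw [Finset.sum_eq_zero]
    · simp
    · intro j hj
      rcases lt_or_ge j m with h | h
      · rw [Nat.choose_eq_zero_of_lt h]; simp
      · rw [Nat.choose_eq_zero_of_lt (show k - 1 < j by omega)]; simp
  · -- main case: m ≤ k - 1
    obtain ⟨K, hK⟩ : ∃ K, k = m + K + 1 := ⟨k - m - 1, by omega⟩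
    subst hK
    obtain ⟨d, hd⟩ : ∃ d, n = m + K + d := ⟨n - (m + K), by omega⟩
    subst hd
    have hk1' : m + K + 1 - 1 = m + K := by omega
    have hsub : m + K + d + m + 1 - (m + K + 1) = m + d := by omega
    rw [hk1', hsub]
    -- reindex the sum
    have hinj : Function.Injective (fun i : ℕ => m + i) := fun a b h => by
      simp only [add_right_inj] at h; exact h
    have reix : (∑ j ∈ Finset.range (m + K + d + 1),
          (Nat.choose j m : ℚ) * (Nat.choose (m + K) j : ℚ) / (Nat.choose (m + K + d) j : ℚ))
        = ∑ i ∈ Finset.range (K + 1),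
          (Nat.choose (m + i) m : ℚ) * (Nat.choose (m + K) (m + i) : ℚ) /
            (Nat.choose (m + K + d) (m + i) : ℚ) := by
      rw [← Finset.sum_image (f := fun j => (Nat.choose j m : ℚ) * (Nat.choose (m + K) j : ℚ) /
            (Nat.choose (m + K + d) j : ℚ)) (g := fun i : ℕ => m + i)
          (fun x _ y _ h => hinj h)]
      apply (Finset.sum_subset _ _).symm
      · intro j hj
        simp only [Finset.mem_image, Finset.mem_range] at hj ⊢
        obtain ⟨i, hi, rfl⟩ := hj
        omega
      · intro j hj hj'
        simp only [Finset.mem_image, Finset.mem_range] at hj hj'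
        rcases lt_or_ge j m with h | h
        · rw [Nat.choose_eq_zero_of_lt h]; simp
        · have : m + K < j := by
            by_contra hcon
            exact hj' ⟨j - m, by omega, by omega⟩
          rw [Nat.choose_eq_zero_of_lt this]; simp
    rw [reix]
    have term : ∀ i, i ∈ Finset.range (K + 1) →
        (Nat.choose (m + i) m : ℚ) * (Nat.choose (m + K) (m + i) : ℚ) /
            (Nat.choose (m + K + d) (m + i) : ℚ)
          = (Nat.choose (m + K) m : ℚ) *
              ((Nat.choose K i : ℚ) / (Nat.choose (m + K + d) (m + i) : ℚ)) := by
      intro i hi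
      simp only [Finset.mem_range] at hi
      have h := Nat.choose_mul (n := m + K) (show m ≤ m + i by omega)
      simp only [Nat.add_sub_cancel_left] at h
      have hq : (Nat.choose (m + K) (m + i) : ℚ) * (Nat.choose (m + i) m : ℚ)
          = (Nat.choose (m + K) m : ℚ) * (Nat.choose K i : ℚ) := by exact_mod_cast h
      rw [← mul_div_assoc]
      congr 1
      linear_combination hq
    rw [Finset.sum_congr rfl term, ← Finset.mul_sum, sumA K m d]
    have c1 : (Nat.choose (m + d) m : ℚ) ≠ 0 :=
      Nat.cast_ne_zero.mpr (Nat.choose_pos (by omega)).ne'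
    have d2 : ((m + d + 1 : ℕ) : ℚ) ≠ 0 := Nat.cast_ne_zero.mpr (by omega)
    have hcast : (↑(m + K + d) : ℚ) + ↑m + 2 - ↑(m + K + 1) = (m : ℚ) + d + 1 := by
      push_cast; ring
    rw [hcast]
    have dne : ((m : ℚ) + d + 1) ≠ 0 := by positivity
    field_simp
    push_cast
    ring
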